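/- Let k ≥ 1 and 0 < β < 2 with β ≤ k. Set α₁ = (2−β)/4 and α₂ = (2−β)/2. There is a constant c such that for all b > 0, ∬_{A₁} |ξ|^{β−k}/(|ξ|⁴ + τ²) dτ dξ ≤ c b^{−2}, where A₁ = {(τ,ξ) ∈ ℝ × ℝ^k : |τ|^{α₁} ≥ |ξ|^{α₂} and |τ|^{α₁} > b}. -/

import Mathlib

open MeasureTheory Set Metric ENNReal


lemma finJ (k : ℕ) (hk : 1 ≤ k) (s : ℝ) (hks : -(k:ℝ) < s) (hs0 : s ≤ 0) :
    ∫⁻ x : EuclideanSpace ℝ (Fin k) in closedBall 0 1, ENNReal.ofReal (‖x‖ ^ s) < ⊤ := by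
  set E := EuclideanSpace ℝ (Fin k)
  rcases eq_or_lt_of_le hs0 with rfl | hs
  · calc ∫⁻ x : E in closedBall 0 1, ENNReal.ofReal (‖x‖ ^ (0:ℝ))
        ≤ ∫⁻ _ in closedBall (0:E) 1, 1 := by
          refine lintegral_mono fun x => ?_
          simp [Real.rpow_zero]
      _ < ⊤ := by
          rw [lintegral_one, Measure.restrict_apply_univ]
          exact measure_closedBall_lt_top
  · have hmeas : AEMeasurable (fun x : E => ‖x‖ ^ s)
        (volume.restrict (closedBall 0 1)) := by fun_prop
    rw [lintegral_eq_lintegral_meas_le _ (ae_of_all _ fun x =>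
      Real.rpow_nonneg (norm_nonneg x) s) hmeas]
    set ν := (volume : Measure E).restrict (closedBall 0 1)
    have key : ∀ t ∈ Ioi (1:ℝ),
        ν {a | t ≤ ‖a‖ ^ s} ≤ ENNReal.ofReal (t ^ (s⁻¹ * k)) * volume (ball (0:E) 1) := by
      intro t ht
      have ht1 : (1:ℝ) < t := ht
      have ht0 : (0:ℝ) < t := by linarith
      have hsub : {a : E | t ≤ ‖a‖ ^ s} ⊆ closedBall 0 (t ^ s⁻¹) := by
        intro a ha
        have hna : (0:ℝ) < ‖a‖ := by
          rcases eq_or_lt_of_le (norm_nonneg a) with h0 | h0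
          · exfalso
            have h1 : ‖a‖ ^ s = 0 := by rw [← h0, Real.zero_rpow hs.ne]
            have := ha.out; rw [h1] at this; linarith
          · exact h0
        have h2 : (‖a‖ ^ s) ^ s⁻¹ ≤ t ^ s⁻¹ :=
          Real.rpow_le_rpow_of_nonpos ht0 ha.out (inv_nonpos.mpr hs0)
        rw [← Real.rpow_mul (norm_nonneg a), mul_inv_cancel₀ hs.ne, Real.rpow_one] at h2
        simpa [mem_closedBall_zero_iff] using h2
      calc ν {a : E | t ≤ ‖a‖ ^ s} ≤ volume (closedBall (0:E) (t ^ s⁻¹)) :=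
            le_trans (Measure.restrict_le_self _) (measure_mono hsub)
        _ = ENNReal.ofReal (t ^ (s⁻¹ * k)) * volume (ball (0:E) 1) := by
            rw [Measure.addHaar_closedBall _ _ (Real.rpow_nonneg ht0.le _)]
            congr 2
            rw [← Real.rpow_natCast (t ^ s⁻¹), ← Real.rpow_mul ht0.le,
              finrank_euclideanSpace_fin]
    have hexp : s⁻¹ * k < -1 := by
      rw [← div_eq_inv_mul, div_lt_iff_of_neg hs]
      linarith
    calc ∫⁻ t in Ioi (0:ℝ), ν {a | t ≤ ‖a‖ ^ s}
        ≤ ∫⁻ t in Ioc (0:ℝ) 1 ∪ Ioi 1, ν {a | t ≤ ‖a‖ ^ s} :=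
          lintegral_mono_set Ioi_subset_Ioc_union_Ioi
      _ ≤ (∫⁻ t in Ioc (0:ℝ) 1, ν {a | t ≤ ‖a‖ ^ s}) +
          ∫⁻ t in Ioi (1:ℝ), ν {a | t ≤ ‖a‖ ^ s} := lintegral_union_le _ _ _
      _ < ⊤ := by
          refine ENNReal.add_lt_top.2 ⟨?_, ?_⟩
          · calc ∫⁻ t in Ioc (0:ℝ) 1, ν {a | t ≤ ‖a‖ ^ s}
                ≤ ∫⁻ _ in Ioc (0:ℝ) 1, volume (closedBall (0:E) 1) := by
                  refine lintegral_mono fun t => ?_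
                  exact le_trans (measure_mono (subset_univ _))
                    (le_of_eq (Measure.restrict_apply_univ _))
              _ < ⊤ := by
                  rw [lintegral_const]
                  exact ENNReal.mul_lt_top measure_closedBall_lt_top (by simp)
          · calc ∫⁻ t in Ioi (1:ℝ), ν {a | t ≤ ‖a‖ ^ s}
                ≤ ∫⁻ t in Ioi (1:ℝ),
                    ENNReal.ofReal (t ^ (s⁻¹ * k)) * volume (ball (0:E) 1) :=
                  setLIntegral_mono' measurableSet_Ioi key
              _ = (∫⁻ t in Ioi (1:ℝ), ENNReal.ofReal (t ^ (s⁻¹ * k))) *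
                    volume (ball (0:E) 1) := lintegral_mul_const' _ _ measure_ball_lt_top.ne
              _ < ⊤ := ENNReal.mul_lt_top
                  ((integrableOn_Ioi_rpow_of_lt hexp one_pos).setLIntegral_lt_top)
                  measure_ball_lt_top


lemma scaleJ (k : ℕ) (s : ℝ) (R : ℝ) (hR : 0 < R) :
    ∫⁻ x : EuclideanSpace ℝ (Fin k) in closedBall 0 R, ENNReal.ofReal (‖x‖ ^ s)
      = ENNReal.ofReal (R ^ ((k : ℝ) + s)) *
        ∫⁻ x : EuclideanSpace ℝ (Fin k) in closedBall 0 1, ENNReal.ofReal (‖x‖ ^ s) := by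
  set E := EuclideanSpace ℝ (Fin k)
  set J := ∫⁻ x : E in closedBall 0 1, ENNReal.ofReal (‖x‖ ^ s) with hJ
  set g : E → ℝ≥0∞ := (closedBall (0:E) R).indicator (fun x => ENNReal.ofReal (‖x‖ ^ s))
    with hg
  have hgmeas : Measurable g :=
    (Measurable.indicator (by fun_prop) measurableSet_closedBall)
  have hcomp : (fun y : E => g (R • y)) =
      (closedBall (0:E) 1).indicator (fun y => ENNReal.ofReal (R ^ s) *
        ENNReal.ofReal (‖y‖ ^ s)) := by
    ext y
    have hnorm : ‖R • y‖ = R * ‖y‖ := by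
      rw [norm_smul, Real.norm_eq_abs, abs_of_pos hR]
    by_cases hy : ‖y‖ ≤ 1
    · have hmem : R • y ∈ closedBall (0:E) R := by
        rw [mem_closedBall_zero_iff, hnorm]
        nlinarith
      rw [hg, indicator_of_mem hmem, indicator_of_mem (by simpa [mem_closedBall_zero_iff])]
      rw [hnorm, Real.mul_rpow hR.le (norm_nonneg y), ENNReal.ofReal_mul
        (Real.rpow_nonneg hR.le s)]
    · have hmem : R • y ∉ closedBall (0:E) R := by
        rw [mem_closedBall_zero_iff, hnorm]
        intro h
        exact hy (by nlinarith)
      rw [hg, indicator_of_notMem hmem, indicator_of_notMem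
        (by simpa [mem_closedBall_zero_iff] using hy)]
  have hmap := Measure.map_addHaar_smul (volume : Measure E) (r := R) hR.ne'
  have h1 : ∫⁻ x, g x ∂(Measure.map (fun y : E => R • y) volume)
      = ∫⁻ y, g (R • y) := lintegral_map hgmeas (measurable_const_smul R)
  rw [hmap, lintegral_smul_measure] at h1
  have h2 : ∫⁻ y : E, g (R • y) = ENNReal.ofReal (R ^ s) * J := by
    rw [hcomp, lintegral_indicator measurableSet_closedBall, hJ,
      lintegral_const_mul' _ _ ENNReal.ofReal_ne_top]
  have hRk : (0:ℝ) < R ^ k := pow_pos hR k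
  have hLHS : ∫⁻ x : E in closedBall 0 R, ENNReal.ofReal (‖x‖ ^ s) = ∫⁻ x, g x := by
    rw [hg, lintegral_indicator measurableSet_closedBall]
  rw [hLHS]
  have key : ENNReal.ofReal |(R ^ Module.finrank ℝ E)⁻¹| * ∫⁻ x, g x
      = ENNReal.ofReal (R ^ s) * J := h1.trans h2
  rw [finrank_euclideanSpace_fin] at key
  have hne : ENNReal.ofReal |(R ^ k)⁻¹| ≠ 0 :=
    ne_of_gt (ENNReal.ofReal_pos.mpr (by rw [abs_of_pos (inv_pos.mpr hRk)]; exact inv_pos.mpr hRk))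
  have hinv : (ENNReal.ofReal |(R ^ k)⁻¹|)⁻¹ = ENNReal.ofReal (R ^ k) := by
    rw [abs_of_pos (inv_pos.mpr hRk), ← ENNReal.ofReal_inv_of_pos (inv_pos.mpr hRk), inv_inv]
  calc ∫⁻ x, g x = (ENNReal.ofReal |(R ^ k)⁻¹|)⁻¹ *
        (ENNReal.ofReal |(R ^ k)⁻¹| * ∫⁻ x, g x) := by
        rw [← mul_assoc, ENNReal.inv_mul_cancel hne (by simp), one_mul]
    _ = ENNReal.ofReal (R ^ k) * (ENNReal.ofReal (R ^ s) * J) := by rw [key, hinv]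
    _ = ENNReal.ofReal (R ^ ((k:ℝ) + s)) * J := by
        rw [← mul_assoc, ← ENNReal.ofReal_mul (pow_nonneg hR.le k),
          ← Real.rpow_natCast R k, ← Real.rpow_add hR]


lemma outer1d (a T : ℝ) (ha : a < -1) (hT : 0 < T) :
    ∫⁻ τ in {τ : ℝ | T < |τ|}, ENNReal.ofReal (|τ| ^ a)
      ≤ 2 * ENNReal.ofReal (-T ^ (a + 1) / (a + 1)) := by
  have hIoi : ∫⁻ τ in Ioi T, ENNReal.ofReal (|τ| ^ a)
      = ENNReal.ofReal (-T ^ (a + 1) / (a + 1)) := by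
    have h1 : ∫⁻ τ in Ioi T, ENNReal.ofReal (|τ| ^ a)
        = ∫⁻ τ in Ioi T, ENNReal.ofReal (τ ^ a) := by
      refine setLIntegral_congr_fun measurableSet_Ioi (fun τ hτ => ?_)
      rw [abs_of_pos (lt_trans hT hτ)]
    rw [h1, ← ofReal_integral_eq_lintegral_ofReal (integrableOn_Ioi_rpow_of_lt ha hT)
      ((ae_restrict_mem measurableSet_Ioi).mono fun τ hτ =>
        Real.rpow_nonneg (le_of_lt (lt_trans hT hτ)) a),
      integral_Ioi_rpow_of_lt ha hT]
  have hIio : ∫⁻ τ in Iio (-T), ENNReal.ofReal (|τ| ^ a)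
      = ENNReal.ofReal (-T ^ (a + 1) / (a + 1)) := by
    have hmapneg : Measure.map (fun x : ℝ => -x) volume = volume := Measure.map_neg_eq_self _
    have h2 : ∫⁻ τ in Iio (-T), ENNReal.ofReal (|τ| ^ a) ∂volume
        = ∫⁻ x in (fun x : ℝ => -x) ⁻¹' (Iio (-T)), ENNReal.ofReal (|-x| ^ a) ∂volume := by
      conv_lhs => rw [← hmapneg]
      rw [setLIntegral_map measurableSet_Iio (by fun_prop) measurable_neg]
    rw [h2]
    have hpre : (fun x : ℝ => -x) ⁻¹' (Iio (-T)) = Ioi T := by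
      ext x; simp [neg_lt_neg_iff]
    rw [hpre]
    simpa [abs_neg] using hIoi
  calc ∫⁻ τ in {τ : ℝ | T < |τ|}, ENNReal.ofReal (|τ| ^ a)
      ≤ ∫⁻ τ in Iio (-T) ∪ Ioi T, ENNReal.ofReal (|τ| ^ a) := by
        refine lintegral_mono_set fun τ hτ => ?_
        rcases lt_abs.mp hτ.out with h | h
        · exact Or.inr h
        · exact Or.inl (by simpa [mem_Iio] using by linarith)
    _ ≤ (∫⁻ τ in Iio (-T), ENNReal.ofReal (|τ| ^ a)) +
        ∫⁻ τ in Ioi T, ENNReal.ofReal (|τ| ^ a) := lintegral_union_le _ _ _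
    _ ≤ 2 * ENNReal.ofReal (-T ^ (a + 1) / (a + 1)) := by
        rw [hIio, hIoi, two_mul]

theorem stmt_12 (k : ℕ) (hk : 1 ≤ k) (β : ℝ) (hβ0 : 0 < β) (hβ2 : β < 2) (hβk : β ≤ k) :
    ∃ c : ℝ, ∀ b > (0 : ℝ),
      ∫ p in {p : ℝ × EuclideanSpace ℝ (Fin k) |
          |p.1| ^ ((2 - β) / 4) ≥ ‖p.2‖ ^ ((2 - β) / 2) ∧ |p.1| ^ ((2 - β) / 4) > b},
        ‖p.2‖ ^ (β - (k : ℝ)) / (‖p.2‖ ^ (4 : ℕ) + p.1 ^ 2) ≤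
      c * b ^ (-2 : ℝ) := by
  set E := EuclideanSpace ℝ (Fin k)
  set s : ℝ := β - k with hs_def
  set a : ℝ := β / 2 - 2 with ha_def
  have ha : a < -1 := by rw [ha_def]; linarith
  have ha1 : a + 1 < 0 := by linarith
  set J := ∫⁻ x : E in closedBall 0 1, ENNReal.ofReal (‖x‖ ^ s) with hJ_def
  have hJfin : J < ⊤ := finJ k hk s (by rw [hs_def]; push_cast; linarith)
    (by rw [hs_def]; linarith)
  set c : ℝ := 2 * (-(a + 1)⁻¹) * J.toReal with hc_def
  have hC0 : 0 < -(a + 1)⁻¹ := by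
    rw [neg_pos]
    exact inv_lt_zero.mpr ha1
  have hc_nonneg : 0 ≤ c := by
    have := ENNReal.toReal_nonneg (a := J)
    positivity
  refine ⟨c, fun b hb => ?_⟩
  set T : ℝ := b ^ (4 / (2 - β)) with hT_def
  have h2β : (0:ℝ) < 2 - β := by linarith
  have hT : 0 < T := Real.rpow_pos_of_pos hb _
  set A : Set (ℝ × E) := {p : ℝ × E |
      |p.1| ^ ((2 - β) / 4) ≥ ‖p.2‖ ^ ((2 - β) / 2) ∧ |p.1| ^ ((2 - β) / 4) > b} with hA_def
  have hm1 : Measurable fun p : ℝ × E => ‖p.2‖ ^ ((2 - β) / 2) := by fun_prop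
  have hm2 : Measurable fun p : ℝ × E => |p.1| ^ ((2 - β) / 4) := by fun_prop
  have hA : MeasurableSet A := by
    apply MeasurableSet.inter
    · exact measurableSet_le hm1 hm2
    · exact measurableSet_lt measurable_const hm2
  set f : ℝ × E → ℝ := fun p => ‖p.2‖ ^ (β - (k : ℝ)) / (‖p.2‖ ^ (4 : ℕ) + p.1 ^ 2) with hf_def
  have hfm : Measurable f := by fun_prop
  have hf_nonneg : ∀ p, 0 ≤ f p := fun p => by
    apply div_nonneg (Real.rpow_nonneg (norm_nonneg _) _)
    positivity
  -- facts about membership in A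
  have hmemA : ∀ p : ℝ × E, p ∈ A → T < |p.1| ∧ ‖p.2‖ ≤ Real.sqrt |p.1| := by
    rintro ⟨τ, ξ⟩ ⟨h1, h2⟩
    dsimp only at h1 h2 ⊢
    have hα : (0:ℝ) < (2 - β) / 4 := by linarith
    constructor
    · -- from b < |τ| ^ ((2-β)/4)
      have h5 : (|τ| ^ ((2 - β) / 4)) ^ (4 / (2 - β)) = |τ| := by
        rw [← Real.rpow_mul (abs_nonneg τ),
          show (2 - β) / 4 * (4 / (2 - β)) = 1 by field_simp, Real.rpow_one]
      have := Real.rpow_lt_rpow hb.le h2 (div_pos (by norm_num : (0:ℝ) < 4) h2β)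
      rwa [h5] at this
    · -- from ‖ξ‖ ^ ((2-β)/2) ≤ |τ| ^ ((2-β)/4)
      have hsq : (‖ξ‖ ^ (2:ℕ)) ^ ((2 - β) / 4) = ‖ξ‖ ^ ((2 - β) / 2) := by
        rw [← Real.rpow_natCast ‖ξ‖ 2, ← Real.rpow_mul (norm_nonneg ξ)]
        congr 1
        push_cast
        ring
      have h3 : (‖ξ‖ ^ (2:ℕ)) ^ ((2 - β) / 4) ≤ |τ| ^ ((2 - β) / 4) := by
        rw [hsq]; exact h1
      have h4 : ‖ξ‖ ^ (2:ℕ) ≤ |τ| :=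
        (Real.rpow_le_rpow_iff (by positivity) (abs_nonneg τ) hα).mp h3
      exact (Real.le_sqrt (norm_nonneg ξ) (abs_nonneg τ)).mpr h4
  -- inner bound
  have hinner : ∀ τ : ℝ, (∫⁻ ξ : E, A.indicator (fun p => ENNReal.ofReal (f p)) (τ, ξ))
      ≤ ({τ : ℝ | T < |τ|}).indicator (fun τ => ENNReal.ofReal (|τ| ^ a)) τ * J := by
    intro τ
    by_cases hτ : T < |τ|
    · rw [indicator_of_mem (show τ ∈ {τ : ℝ | T < |τ|} from hτ)]
      have hτ0 : (0:ℝ) < |τ| := lt_trans hT hτ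
      have hτne : τ ≠ 0 := abs_pos.mp hτ0
      have hτ2 : (0:ℝ) < τ ^ 2 := by positivity
      set R := Real.sqrt |τ| with hR_def
      have hR : 0 < R := Real.sqrt_pos.mpr hτ0
      have hpoint : ∀ ξ : E, A.indicator (fun p => ENNReal.ofReal (f p)) (τ, ξ)
          ≤ (closedBall (0:E) R).indicator (fun ξ => ENNReal.ofReal (‖ξ‖ ^ s)) ξ *
            ENNReal.ofReal ((τ ^ 2)⁻¹) := by
        intro ξ
        by_cases hmem : (τ, ξ) ∈ A
        · rw [indicator_of_mem hmem,
            indicator_of_mem (by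
              rw [mem_closedBall_zero_iff]
              exact (hmemA _ hmem).2)]
          rw [← ENNReal.ofReal_mul (Real.rpow_nonneg (norm_nonneg _) _)]
          apply ENNReal.ofReal_le_ofReal
          rw [hf_def, ← div_eq_mul_inv]
          exact div_le_div_of_nonneg_left (Real.rpow_nonneg (norm_nonneg _) _) hτ2
            (le_add_of_nonneg_left (by positivity))
        · rw [indicator_of_notMem hmem]
          exact zero_le'
      calc (∫⁻ ξ : E, A.indicator (fun p => ENNReal.ofReal (f p)) (τ, ξ))
          ≤ ∫⁻ ξ : E, (closedBall (0:E) R).indicator (fun ξ => ENNReal.ofReal (‖ξ‖ ^ s)) ξ *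
              ENNReal.ofReal ((τ ^ 2)⁻¹) := lintegral_mono hpoint
        _ = (∫⁻ ξ : E in closedBall 0 R, ENNReal.ofReal (‖ξ‖ ^ s)) *
              ENNReal.ofReal ((τ ^ 2)⁻¹) := by
            rw [lintegral_mul_const' _ _ ENNReal.ofReal_ne_top,
              lintegral_indicator measurableSet_closedBall]
        _ = ENNReal.ofReal (R ^ ((k:ℝ) + s)) * J * ENNReal.ofReal ((τ ^ 2)⁻¹) := by
            rw [scaleJ k s R hR]
        _ = ENNReal.ofReal (|τ| ^ a) * J := by
            rw [mul_right_comm]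
            congr 1
            rw [← ENNReal.ofReal_mul (by positivity)]
            congr 1
            have hks : (k:ℝ) + s = β := by rw [hs_def]; ring
            have h6 : R ^ ((k:ℝ) + s) = |τ| ^ (β / 2) := by
              rw [hks, hR_def, Real.sqrt_eq_rpow, ← Real.rpow_mul (abs_nonneg τ)]
              congr 1
              ring
            have h7 : (τ ^ 2)⁻¹ = |τ| ^ (-2 : ℝ) := by
              rw [Real.rpow_neg (abs_nonneg τ),
                show ((2:ℝ)) = ((2:ℕ):ℝ) by norm_num, Real.rpow_natCast, sq_abs]
            rw [h6, h7, ← Real.rpow_add hτ0,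
              show β / 2 + -2 = a by rw [ha_def]; ring]
    · rw [indicator_of_notMem (show τ ∉ {τ : ℝ | T < |τ|} from hτ), zero_mul]
      have : ∀ ξ : E, A.indicator (fun p => ENNReal.ofReal (f p)) (τ, ξ) = 0 := by
        intro ξ
        apply indicator_of_notMem
        intro hmem
        exact hτ (hmemA _ hmem).1
      simp only [this, lintegral_zero, le_refl]
  -- main chain
  have hT21 : T ^ (a + 1) = b ^ (-2 : ℝ) := by
    rw [hT_def, ← Real.rpow_mul hb.le]
    congr 1
    rw [ha_def]
    field_simp
    ring
  have hboundreal : -T ^ (a + 1) / (a + 1) = b ^ (-2:ℝ) * (-(a + 1)⁻¹) := by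
    rw [hT21]; field_simp
  have hmain : (∫⁻ p in A, ENNReal.ofReal (f p)) ≤ ENNReal.ofReal (c * b ^ (-2:ℝ)) := by
    calc (∫⁻ p in A, ENNReal.ofReal (f p))
        = ∫⁻ p : ℝ × E, A.indicator (fun p => ENNReal.ofReal (f p)) p := by
          rw [lintegral_indicator hA]
      _ = ∫⁻ τ : ℝ, ∫⁻ ξ : E, A.indicator (fun p => ENNReal.ofReal (f p)) (τ, ξ) := by
          rw [Measure.volume_eq_prod, lintegral_prod]
          exact ((hfm.ennreal_ofReal).indicator hA).aemeasurable
      _ ≤ ∫⁻ τ : ℝ, ({τ : ℝ | T < |τ|}).indicator (fun τ => ENNReal.ofReal (|τ| ^ a)) τ * J :=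
          lintegral_mono hinner
      _ = (∫⁻ τ in {τ : ℝ | T < |τ|}, ENNReal.ofReal (|τ| ^ a)) * J := by
          rw [lintegral_mul_const' _ _ hJfin.ne,
            lintegral_indicator (measurableSet_lt measurable_const measurable_abs)]
      _ ≤ (2 * ENNReal.ofReal (-T ^ (a + 1) / (a + 1))) * J :=
          mul_le_mul_of_nonneg_right (outer1d a T ha hT) zero_le'
      _ = ENNReal.ofReal (c * b ^ (-2:ℝ)) := by
          rw [hboundreal, hc_def, ← ENNReal.ofReal_toReal hJfin.ne,
            ← ENNReal.ofReal_ofNat, ← ENNReal.ofReal_mul (by norm_num),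
            ← ENNReal.ofReal_mul (by positivity)]
          congr 1
          rw [ENNReal.toReal_ofReal ENNReal.toReal_nonneg]
          ring
  -- from Bochner to lintegral
  rw [integral_eq_lintegral_of_nonneg_ae (ae_of_all _ fun p => hf_nonneg p)
    (hfm.aestronglyMeasurable)]
  exact ENNReal.toReal_le_of_le_ofReal
    (mul_nonneg hc_nonneg (Real.rpow_nonneg hb.le _)) hmain
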